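/- Let I ⊂ S = K[x_1,…,x_n] be a monomial ideal with minimal monomial generating set G(I) = {u_1,…,u_m}. Then I has linear quotients with admissible order u_1 > u_2 > ⋯ > u_m if and only if the polarization I^℘ has linear quotients with admissible order u_1^℘ > u_2^℘ > ⋯ > u_m^℘; that is, all colon ideals (u_1,…,u_{ℓ−1}) : u_ℓ (2 ≤ ℓ ≤ m) are generated by variables if and only if all colon ideals (u_1^℘,…,u_{ℓ−1}^℘) : u_ℓ^℘ (2 ≤ ℓ ≤ m) are generated by variables. -/

import Mathlib

open Finset MvPolynomial

/-- The polarization of the monomial `x^u = x_1^{u 1}⋯x_n^{u n}`: the squarefree monomial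
`∏_i x_{i,1}x_{i,2}⋯x_{i,u i}` in the polynomial ring on doubly indexed variables. -/
noncomputable def polMon (K : Type*) [Field K] {n : ℕ} (u : Fin n →₀ ℕ) :
    MvPolynomial (Fin n × ℕ) K :=
  ∏ i : Fin n, ∏ j ∈ Finset.range (u i), X (i, j)

/-- exponent vector of the polarization -/
noncomputable def pol {n : ℕ} (w : Fin n →₀ ℕ) : (Fin n × ℕ) →₀ ℕ :=
  ∑ i : Fin n, ∑ j ∈ Finset.range (w i), Finsupp.single (i, j) 1

lemma pol_apply {n : ℕ} (w : Fin n →₀ ℕ) (i : Fin n) (j : ℕ) :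
    pol w (i, j) = if j < w i then 1 else 0 := by
  classical
  unfold pol
  rw [Finsupp.finset_sum_apply]
  simp_rw [Finsupp.finset_sum_apply, Finsupp.single_apply, Prod.mk.injEq]
  rw [Finset.sum_eq_single i]
  · simp [Finset.sum_ite_eq']
  · intro b _ hb
    simp [hb]
  · simp

lemma prod_monomial {K : Type*} [Field K] {σ α : Type*} (s : Finset α) (g : α → (σ →₀ ℕ)) :
    (∏ a ∈ s, (monomial (g a) (1 : K))) = monomial (∑ a ∈ s, g a) 1 := by
  classical
  induction s using Finset.cons_induction with
  | empty => simp
  | cons a s ha ih => rw [Finset.prod_cons, Finset.sum_cons, ih, monomial_mul, one_mul]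

lemma polMon_eq (K : Type*) [Field K] {n : ℕ} (w : Fin n →₀ ℕ) :
    polMon K w = monomial (pol w) 1 := by
  unfold polMon pol
  simp_rw [X, prod_monomial]

lemma mem_colon_iff {K : Type*} [Field K] {σ : Type*} (U : Set (σ →₀ ℕ)) (v : σ →₀ ℕ)
    (p : MvPolynomial σ K) :
    p ∈ Submodule.colon (Ideal.span ((fun s => monomial s (1 : K)) '' U))
        (Ideal.span {monomial v (1 : K)}) ↔
      ∀ a ∈ p.support, ∃ w ∈ U, w ≤ a + v := by
  rw [← Ideal.submodule_span_eq (s := {monomial v (1 : K)}), Submodule.mem_colon_span_singleton,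
    smul_eq_mul, mem_ideal_span_monomial_image]
  constructor
  · intro h a ha
    refine h (a + v) ?_
    rw [mem_support_iff, coeff_mul_monomial, mul_one]
    exact mem_support_iff.mp ha
  · intro h b hb
    rw [mem_support_iff, coeff_mul_monomial'] at hb
    split_ifs at hb with hvb
    · rw [mul_one] at hb
      obtain ⟨w, hw, hle⟩ := h (b - v) (mem_support_iff.mpr hb)
      exact ⟨w, hw, hle.trans (by rw [tsub_add_cancel_of_le hvb])⟩
    · exact absurd rfl hb

lemma colon_eq_iff {K : Type*} [Field K] {σ : Type*} (U : Set (σ →₀ ℕ)) (v : σ →₀ ℕ)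
    (T : Set σ) :
    (Submodule.colon (Ideal.span ((fun s => monomial s (1 : K)) '' U))
        (Ideal.span {monomial v (1 : K)})
      = Ideal.span ((fun i => (X i : MvPolynomial σ K)) '' T)) ↔
    ∀ a : σ →₀ ℕ, (∃ w ∈ U, w ≤ a + v) ↔ (∃ i ∈ T, a i ≠ 0) := by
  classical
  constructor
  · intro h a
    have := SetLike.ext_iff.mp h (monomial a (1 : K))
    rw [mem_colon_iff, mem_ideal_span_X_image] at this
    simpa [coeff_monomial] using this
  · intro h
    ext p
    rw [mem_colon_iff, mem_ideal_span_X_image]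
    exact forall₂_congr fun a _ => h a

section comb
variable {n m : ℕ} (u : Fin m → (Fin n →₀ ℕ)) (ℓ : Fin m)

def Cond : Prop :=
  ∀ k, k < ℓ → ∃ i, u ℓ i < u k i ∧ ∃ k', k' < ℓ ∧ u k' ≤ u ℓ + Finsupp.single i 1

lemma leftC :
    (∃ T : Set (Fin n), ∀ a : Fin n →₀ ℕ,
        (∃ k, k < ℓ ∧ u k ≤ a + u ℓ) ↔ ∃ i ∈ T, a i ≠ 0) ↔ Cond u ℓ := by
  constructor
  · rintro ⟨T, hT⟩ k hk
    obtain ⟨i, hiT, hi⟩ := (hT (u k - u ℓ)).mp ⟨k, hk, le_tsub_add⟩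
    rw [Finsupp.tsub_apply] at hi
    have hlt : u ℓ i < u k i := by omega
    obtain ⟨k', hk', hle⟩ := (hT (Finsupp.single i 1)).mpr ⟨i, hiT, by simp⟩
    exact ⟨i, hlt, k', hk', by rwa [add_comm] at hle⟩
  · intro hC
    refine ⟨{i | ∃ k', k' < ℓ ∧ u k' ≤ u ℓ + Finsupp.single i 1}, fun a => ?_⟩
    constructor
    · rintro ⟨k, hk, hle⟩
      obtain ⟨i, hlt, hk'⟩ := hC k hk
      refine ⟨i, hk', ?_⟩
      have := (Finsupp.le_def.mp hle) i
      rw [Finsupp.add_apply] at this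
      omega
    · rintro ⟨i, ⟨k', hk', hle⟩, ha⟩
      refine ⟨k', hk', hle.trans ?_⟩
      rw [Finsupp.le_def]
      intro i'
      rw [Finsupp.add_apply, Finsupp.add_apply, Finsupp.single_apply]
      rcases eq_or_ne i i' with rfl | hne
      · rw [if_pos rfl]
        omega
      · simp [hne]

lemma rightC :
    (∃ T : Set (Fin n × ℕ), ∀ a : (Fin n × ℕ) →₀ ℕ,
        (∃ k, k < ℓ ∧ pol (u k) ≤ a + pol (u ℓ)) ↔ ∃ v ∈ T, a v ≠ 0) ↔ Cond u ℓ := by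
  constructor
  · rintro ⟨T, hT⟩ k hk
    obtain ⟨⟨i, j⟩, hijT, hij⟩ := (hT (pol (u k) - pol (u ℓ))).mp ⟨k, hk, le_tsub_add⟩
    rw [Finsupp.tsub_apply, pol_apply, pol_apply] at hij
    have hj1 : j < u k i := by by_contra hc; simp [hc] at hij
    have hj2 : ¬ j < u ℓ i := by by_contra hc; simp [hj1, hc] at hij
    obtain ⟨k', hk', hle⟩ := (hT (Finsupp.single (i, j) 1)).mpr ⟨(i, j), hijT, by simp⟩
    refine ⟨i, by omega, k', hk', ?_⟩
    rw [Finsupp.le_def]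
    intro i'
    rw [Finsupp.add_apply, Finsupp.single_apply]
    rcases eq_or_ne i i' with rfl | hne
    · -- u k' i ≤ u ℓ i + 1
      rw [if_pos rfl]
      by_contra hc
      push_neg at hc
      have h1 := Finsupp.le_def.mp hle (i, u ℓ i)
      have h2 := Finsupp.le_def.mp hle (i, u ℓ i + 1)
      rw [Finsupp.add_apply, Finsupp.single_apply, pol_apply, pol_apply] at h1 h2
      rw [if_pos (show u ℓ i < u k' i by omega), if_neg (lt_irrefl (u ℓ i))] at h1
      rw [if_pos (show u ℓ i + 1 < u k' i by omega),
        if_neg (show ¬ u ℓ i + 1 < u ℓ i by omega)] at h2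
      have j1 : (i, j) = (i, u ℓ i) := by
        by_contra hne'; rw [if_neg hne'] at h1; omega
      have j2 : (i, j) = (i, u ℓ i + 1) := by
        by_contra hne'; rw [if_neg hne'] at h2; omega
      have e1 := congrArg Prod.snd j1
      have e2 := congrArg Prod.snd j2
      simp only at e1 e2
      omega
    · -- u k' i' ≤ u ℓ i'
      rw [if_neg hne, add_zero]
      by_contra hc
      push_neg at hc
      have h1 := Finsupp.le_def.mp hle (i', u ℓ i')
      rw [Finsupp.add_apply, Finsupp.single_apply, pol_apply, pol_apply,
        if_pos hc, if_neg (lt_irrefl (u ℓ i')),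
        if_neg (show ¬ (i, j) = (i', u ℓ i') from fun h => hne (congrArg Prod.fst h))] at h1
      omega
  · intro hC
    refine ⟨{v : Fin n × ℕ | v.2 = u ℓ v.1 ∧ ∃ k', k' < ℓ ∧ u k' ≤ u ℓ + Finsupp.single v.1 1},
      fun a => ?_⟩
    constructor
    · rintro ⟨k, hk, hle⟩
      obtain ⟨i, hlt, hk'⟩ := hC k hk
      refine ⟨(i, u ℓ i), ⟨rfl, hk'⟩, ?_⟩
      have := Finsupp.le_def.mp hle (i, u ℓ i)
      rw [Finsupp.add_apply, pol_apply, pol_apply, if_pos hlt, if_neg (lt_irrefl _)] at this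
      omega
    · rintro ⟨⟨i, j⟩, ⟨hj, k', hk', hle⟩, ha⟩
      dsimp only at hj hle ha
      subst hj
      refine ⟨k', hk', ?_⟩
      rw [Finsupp.le_def]
      rintro ⟨i', j'⟩
      rw [Finsupp.add_apply, pol_apply, pol_apply]
      split_ifs with h1 h2
      · omega
      · -- j' < u k' i', ¬ j' < u ℓ i'
        have hb := Finsupp.le_def.mp hle i'
        rw [Finsupp.add_apply, Finsupp.single_apply] at hb
        rcases eq_or_ne i i' with rfl | hne
        · rw [if_pos rfl] at hb
          have : j' = u ℓ i := by omega
          subst this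
          omega
        · rw [if_neg hne] at hb
          omega
      · omega
      · omega
end comb

theorem stmt17 (K : Type*) [Field K] (n m : ℕ) (u : Fin m → (Fin n →₀ ℕ))
    (hmin : ∀ k j : Fin m, k ≠ j → ¬ u k ≤ u j) :
    ((∀ ℓ : Fin m, ∃ T : Set (Fin n),
        Submodule.colon
            (Ideal.span {p : MvPolynomial (Fin n) K |
              ∃ k, k < ℓ ∧ p = monomial (u k) (1 : K)})
            (Ideal.span {monomial (u ℓ) (1 : K)})
          = Ideal.span ((fun i => (X i : MvPolynomial (Fin n) K)) '' T)) ↔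
     (∀ ℓ : Fin m, ∃ T : Set (Fin n × ℕ),
        Submodule.colon
            (Ideal.span {p : MvPolynomial (Fin n × ℕ) K |
              ∃ k, k < ℓ ∧ p = polMon K (u k)})
            (Ideal.span {polMon K (u ℓ)})
          = Ideal.span ((fun v => (X v : MvPolynomial (Fin n × ℕ) K)) '' T))) := by
  have e1 : ∀ ℓ : Fin m, {p : MvPolynomial (Fin n) K | ∃ k, k < ℓ ∧ p = monomial (u k) (1 : K)}
      = (fun s => monomial s (1 : K)) '' {w | ∃ k, k < ℓ ∧ w = u k} := by
    intro ℓ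
    ext p
    constructor
    · rintro ⟨k, hk, rfl⟩; exact ⟨u k, ⟨k, hk, rfl⟩, rfl⟩
    · rintro ⟨w, ⟨k, hk, rfl⟩, rfl⟩; exact ⟨k, hk, rfl⟩
  have e2 : ∀ ℓ : Fin m, {p : MvPolynomial (Fin n × ℕ) K | ∃ k, k < ℓ ∧ p = polMon K (u k)}
      = (fun s => monomial s (1 : K)) '' {w | ∃ k, k < ℓ ∧ w = pol (u k)} := by
    intro ℓ
    ext p
    constructor
    · rintro ⟨k, hk, rfl⟩; exact ⟨pol (u k), ⟨k, hk, rfl⟩, by simp [polMon_eq]⟩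
    · rintro ⟨w, ⟨k, hk, rfl⟩, rfl⟩; exact ⟨k, hk, by simp [polMon_eq]⟩
  simp_rw [e1, e2, polMon_eq, colon_eq_iff]
  have key : ∀ ℓ : Fin m,
      (∃ T : Set (Fin n), ∀ a : Fin n →₀ ℕ,
        (∃ w ∈ {w | ∃ k, k < ℓ ∧ w = u k}, w ≤ a + u ℓ) ↔ ∃ i ∈ T, a i ≠ 0) ↔
      (∃ T : Set (Fin n × ℕ), ∀ a : (Fin n × ℕ) →₀ ℕ,
        (∃ w ∈ {w | ∃ k, k < ℓ ∧ w = pol (u k)}, w ≤ a + pol (u ℓ)) ↔ ∃ v ∈ T, a v ≠ 0) := by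
    intro ℓ
    have l1 : ∀ a : Fin n →₀ ℕ,
        (∃ w ∈ {w | ∃ k, k < ℓ ∧ w = u k}, w ≤ a + u ℓ) ↔ ∃ k, k < ℓ ∧ u k ≤ a + u ℓ := by
      intro a; constructor
      · rintro ⟨w, ⟨k, hk, rfl⟩, hle⟩; exact ⟨k, hk, hle⟩
      · rintro ⟨k, hk, hle⟩; exact ⟨u k, ⟨k, hk, rfl⟩, hle⟩
    have l2 : ∀ a : (Fin n × ℕ) →₀ ℕ,
        (∃ w ∈ {w | ∃ k, k < ℓ ∧ w = pol (u k)}, w ≤ a + pol (u ℓ)) ↔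
        ∃ k, k < ℓ ∧ pol (u k) ≤ a + pol (u ℓ) := by
      intro a; constructor
      · rintro ⟨w, ⟨k, hk, rfl⟩, hle⟩; exact ⟨k, hk, hle⟩
      · rintro ⟨k, hk, hle⟩; exact ⟨pol (u k), ⟨k, hk, rfl⟩, hle⟩
    simp_rw [l1, l2]
    rw [leftC, rightC]
  exact forall_congr' key
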